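/- The skewness function S ↦ Skew(S) is continuous on the set of positive definite symmetric d × d matrices; quantitatively, |Skew(H) - Skew(S)| ≤ (2 + Skew(H)) · d · ‖H - S‖_∞ / λ_min(S). -/

import Mathlib

open Real Finset

section Aux

noncomputable def N2 {d : ℕ} (x : Fin d → ℝ) : ℝ := Real.sqrt (∑ i, x i ^ 2)

lemma N2_eq {d : ℕ} (x : Fin d → ℝ) : N2 x = ‖(WithLp.equiv 2 (Fin d → ℝ)).symm x‖ := by
  rw [EuclideanSpace.norm_eq]
  simp [N2, sq_abs]

lemma abs_N2_sub_N2_le {d : ℕ} (x y : Fin d → ℝ) : |N2 x - N2 y| ≤ N2 (x - y) := by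
  rw [N2_eq, N2_eq, N2_eq, WithLp.equiv_symm_apply, WithLp.toLp_sub]
  exact abs_norm_sub_norm_le _ _

lemma abs_sum_mul_le {d : ℕ} (x y : Fin d → ℝ) : |∑ i, x i * y i| ≤ N2 x * N2 y := by
  have h := abs_real_inner_le_norm ((WithLp.equiv 2 (Fin d → ℝ)).symm x)
      ((WithLp.equiv 2 (Fin d → ℝ)).symm y)
  rw [PiLp.inner_apply] at h
  simpa [N2_eq, RCLike.inner_apply, mul_comm] using h

lemma N2_le_of_abs_le {d : ℕ} {x : Fin d → ℝ} {c : ℝ} (hc : 0 ≤ c) (h : ∀ i, |x i| ≤ c) :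
    N2 x ≤ Real.sqrt d * c := by
  have hsum : ∑ i, x i ^ 2 ≤ ∑ _i : Fin d, c ^ 2 := by
    apply Finset.sum_le_sum
    intro i _
    have := h i
    nlinarith [abs_nonneg (x i), sq_abs (x i)]
  calc N2 x ≤ Real.sqrt (∑ _i : Fin d, c ^ 2) := Real.sqrt_le_sqrt hsum
    _ = Real.sqrt (d * c ^ 2) := by simp [mul_comm]
    _ = Real.sqrt d * c := by
        rw [Real.sqrt_mul (Nat.cast_nonneg d), Real.sqrt_sq hc]

def sphSet (d : ℕ) : Set (Fin d → ℝ) := {u | ∑ i, u i ^ 2 = 1}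

lemma sph_nonempty {d : ℕ} (hd : 0 < d) : Nonempty {u : Fin d → ℝ // ∑ i, u i ^ 2 = 1} := by
  refine ⟨⟨Pi.single ⟨0, hd⟩ 1, ?_⟩⟩
  rw [Finset.sum_eq_single ⟨0, hd⟩]
  · simp
  · intro b _ hb; simp [Pi.single_apply, hb]
  · simp

lemma isCompact_sphSet (d : ℕ) : IsCompact (sphSet d) := by
  have hclosed : IsClosed (sphSet d) := by
    have : Continuous fun u : Fin d → ℝ => ∑ i, u i ^ 2 :=
      continuous_finset_sum _ fun i _ => (continuous_apply i).pow 2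
    exact isClosed_eq this continuous_const
  have hbdd : Bornology.IsBounded (sphSet d) := by
    apply (Metric.isBounded_closedBall (x := (0 : Fin d → ℝ)) (r := 1)).subset
    intro u hu
    rw [Metric.mem_closedBall, dist_zero_right]
    rw [pi_norm_le_iff_of_nonneg zero_le_one]
    intro i
    rw [Real.norm_eq_abs, ← Real.sqrt_one, ← Real.sqrt_sq_eq_abs]
    apply Real.sqrt_le_sqrt
    rw [← hu]
    exact Finset.single_le_sum (f := fun j => u j ^ 2) (fun j _ => sq_nonneg _) (Finset.mem_univ i)
  exact Metric.isCompact_of_isClosed_isBounded hclosed hbdd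

lemma N2_unit {d : ℕ} (u : {u : Fin d → ℝ // ∑ i, u i ^ 2 = 1}) : N2 u.1 = 1 := by
  rw [N2, u.2, Real.sqrt_one]

lemma unit_ne_zero {d : ℕ} (u : {u : Fin d → ℝ // ∑ i, u i ^ 2 = 1}) : u.1 ≠ 0 := by
  intro h
  have := u.2
  rw [h] at this
  simp at this

noncomputable def ray {d : ℕ} (M : Matrix (Fin d) (Fin d) ℝ) (u : Fin d → ℝ) : ℝ :=
  ∑ i, u i * M.mulVec u i

lemma ray_pos {d : ℕ} {M : Matrix (Fin d) (Fin d) ℝ} (hM : M.PosDef)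
    (u : {u : Fin d → ℝ // ∑ i, u i ^ 2 = 1}) : 0 < ray M u.1 := by
  have := hM.dotProduct_mulVec_pos (unit_ne_zero u)
  simpa [ray, dotProduct] using this

lemma continuous_ray {d : ℕ} (M : Matrix (Fin d) (Fin d) ℝ) : Continuous (ray M) := by
  apply continuous_finset_sum
  intro i _
  apply (continuous_apply i).mul
  unfold Matrix.mulVec dotProduct
  exact continuous_finset_sum _ fun j _ => (continuous_const.mul (continuous_apply j))

end Aux

/-- `Skew S = sup_{x ≠ 0} ‖x‖₂‖Sx‖₂/(xᵀSx) - 1`, as a supremum over unit vectors. -/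
noncomputable def skew {d : ℕ} (S : Matrix (Fin d) (Fin d) ℝ) : ℝ :=
  ⨆ u : {u : Fin d → ℝ // ∑ i, u i ^ 2 = 1},
    Real.sqrt (∑ i, (S.mulVec u.1 i) ^ 2) / (∑ i, u.1 i * S.mulVec u.1 i) - 1

/-- The smallest eigenvalue of a symmetric matrix, as the infimum of the Rayleigh
quotient over unit vectors. -/
noncomputable def lambdaMin {d : ℕ} (M : Matrix (Fin d) (Fin d) ℝ) : ℝ :=
  ⨅ u : {u : Fin d → ℝ // ∑ i, u i ^ 2 = 1}, ∑ i, u.1 i * M.mulVec u.1 i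

section Facts

noncomputable def gfun {d : ℕ} (M : Matrix (Fin d) (Fin d) ℝ) (u : Fin d → ℝ) : ℝ :=
  N2 (M.mulVec u) / ray M u - 1

lemma skew_eq {d : ℕ} (M : Matrix (Fin d) (Fin d) ℝ) :
    skew M = ⨆ u : {u : Fin d → ℝ // ∑ i, u i ^ 2 = 1}, gfun M u.1 := rfl

lemma lambdaMin_eq {d : ℕ} (M : Matrix (Fin d) (Fin d) ℝ) :
    lambdaMin M = ⨅ u : {u : Fin d → ℝ // ∑ i, u i ^ 2 = 1}, ray M u.1 := rfl

lemma lambdaMin_le {d : ℕ} {M : Matrix (Fin d) (Fin d) ℝ} (hM : M.PosDef)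
    (u : {u : Fin d → ℝ // ∑ i, u i ^ 2 = 1}) : lambdaMin M ≤ ray M u.1 := by
  rw [lambdaMin_eq]
  apply ciInf_le
  exact ⟨0, by rintro r ⟨v, rfl⟩; exact (ray_pos hM v).le⟩

lemma lambdaMin_pos {d : ℕ} {M : Matrix (Fin d) (Fin d) ℝ} (hM : M.PosDef) (hd : 0 < d) :
    0 < lambdaMin M := by
  have hne : (sphSet d).Nonempty := by
    obtain ⟨u⟩ := sph_nonempty hd
    exact ⟨u.1, u.2⟩
  obtain ⟨v, hv, hmin⟩ := (isCompact_sphSet d).exists_isMinOn hne (continuous_ray M).continuousOn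
  have hvpos : 0 < ray M v := ray_pos hM ⟨v, hv⟩
  rw [lambdaMin_eq]
  have hle : ray M v ≤ ⨅ u : {u : Fin d → ℝ // ∑ i, u i ^ 2 = 1}, ray M u.1 := by
    have : Nonempty {u : Fin d → ℝ // ∑ i, u i ^ 2 = 1} := sph_nonempty hd
    exact le_ciInf fun u => hmin u.2
  linarith

lemma ray_le_N2 {d : ℕ} {M : Matrix (Fin d) (Fin d) ℝ}
    (u : {u : Fin d → ℝ // ∑ i, u i ^ 2 = 1}) : ray M u.1 ≤ N2 (M.mulVec u.1) := by
  have h := abs_sum_mul_le u.1 (M.mulVec u.1)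
  rw [N2_unit u, one_mul] at h
  exact le_trans (le_abs_self _) h

lemma continuousOn_gfun {d : ℕ} {M : Matrix (Fin d) (Fin d) ℝ} (hM : M.PosDef) :
    ContinuousOn (gfun M) (sphSet d) := by
  apply ContinuousOn.sub _ continuousOn_const
  apply ContinuousOn.div
  · apply Continuous.continuousOn
    apply Real.continuous_sqrt.comp
    apply continuous_finset_sum
    intro i _
    have : Continuous fun u : Fin d → ℝ => M.mulVec u i := by
      unfold Matrix.mulVec dotProduct
      exact continuous_finset_sum _ fun j _ => (continuous_const.mul (continuous_apply j))
    exact this.pow 2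
  · exact (continuous_ray M).continuousOn
  · intro u hu
    exact (ray_pos hM ⟨u, hu⟩).ne'

lemma bddAbove_gfun {d : ℕ} {M : Matrix (Fin d) (Fin d) ℝ} (hM : M.PosDef) :
    BddAbove (Set.range fun u : {u : Fin d → ℝ // ∑ i, u i ^ 2 = 1} => gfun M u.1) := by
  have himg : IsCompact (gfun M '' sphSet d) :=
    (isCompact_sphSet d).image_of_continuousOn (continuousOn_gfun hM)
  have hr : (Set.range fun u : {u : Fin d → ℝ // ∑ i, u i ^ 2 = 1} => gfun M u.1)
      = gfun M '' sphSet d := by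
    ext x
    constructor
    · rintro ⟨u, rfl⟩; exact ⟨u.1, u.2, rfl⟩
    · rintro ⟨v, hv, rfl⟩; exact ⟨⟨v, hv⟩, rfl⟩
  rw [hr]
  exact himg.bddAbove

lemma gfun_le_skew {d : ℕ} {M : Matrix (Fin d) (Fin d) ℝ} (hM : M.PosDef)
    (u : {u : Fin d → ℝ // ∑ i, u i ^ 2 = 1}) : gfun M u.1 ≤ skew M := by
  rw [skew_eq]
  exact le_ciSup (bddAbove_gfun hM) u

lemma gfun_nonneg {d : ℕ} {M : Matrix (Fin d) (Fin d) ℝ} (hM : M.PosDef)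
    (u : {u : Fin d → ℝ // ∑ i, u i ^ 2 = 1}) : 0 ≤ gfun M u.1 := by
  have hr : 0 < ray M u.1 := ray_pos hM u
  have : 1 ≤ N2 (M.mulVec u.1) / ray M u.1 := (one_le_div hr).2 (ray_le_N2 u)
  simp only [gfun]
  linarith

lemma skew_nonneg {d : ℕ} {M : Matrix (Fin d) (Fin d) ℝ} (hM : M.PosDef) (hd : 0 < d) :
    0 ≤ skew M := by
  obtain ⟨u⟩ := sph_nonempty hd
  exact le_trans (gfun_nonneg hM u) (gfun_le_skew hM u)

lemma ratio_diff_le {a b p q D lam s : ℝ} (hp : 0 < p) (hq : 0 < q) (hlam : 0 < lam)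
    (hlq : lam ≤ q) (hpa : p ≤ a) (hab : |a - b| ≤ D) (hpq : |p - q| ≤ D)
    (hs : a / p - 1 ≤ s) : |a / p - b / q| ≤ (2 + s) * D / lam := by
  have hD : 0 ≤ D := le_trans (abs_nonneg _) hab
  have ha : 0 < a := lt_of_lt_of_le hp hpa
  have key : a / p - b / q = a * (q - p) / (p * q) + (a - b) / q := by
    field_simp
    ring
  have h1 : |a / p - b / q| ≤ a * |q - p| / (p * q) + |a - b| / q := by
    rw [key]
    calc |a * (q - p) / (p * q) + (a - b) / q|
        ≤ |a * (q - p) / (p * q)| + |(a - b) / q| := abs_add_le _ _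
      _ = a * |q - p| / (p * q) + |a - b| / q := by
          rw [abs_div, abs_div, abs_mul, abs_of_pos ha, abs_of_pos (mul_pos hp hq),
            abs_of_pos hq]
  have h2 : a * |q - p| / (p * q) + |a - b| / q ≤ a * D / (p * q) + D / q := by
    gcongr
    rw [abs_sub_comm] at hpq
    exact hpq
  have h3 : a * D / (p * q) + D / q = (1 + a / p) * (D / q) := by
    field_simp
    ring
  have h4 : (1 + a / p) * (D / q) ≤ (2 + s) * (D / lam) := by
    apply mul_le_mul
    · have : 1 ≤ a / p := (one_le_div hp).2 hpa
      linarith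
    · gcongr
    · exact div_nonneg hD hq.le
    · have : 1 ≤ a / p := (one_le_div hp).2 hpa
      linarith
  calc |a / p - b / q| ≤ a * D / (p * q) + D / q := le_trans h1 h2
    _ = (1 + a / p) * (D / q) := h3
    _ ≤ (2 + s) * (D / lam) := h4
    _ = (2 + s) * D / lam := by ring

lemma diffvec_bound {d : ℕ} {H S : Matrix (Fin d) (Fin d) ℝ} {ε : ℝ}
    (hε : ∀ i j, |H i j - S i j| ≤ ε) (hεnn : 0 ≤ ε)
    (u : {u : Fin d → ℝ // ∑ i, u i ^ 2 = 1}) :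
    N2 (fun i => H.mulVec u.1 i - S.mulVec u.1 i) ≤ d * ε := by
  have h1 : ∀ i, |H.mulVec u.1 i - S.mulVec u.1 i| ≤ Real.sqrt d * ε := by
    intro i
    have heq : H.mulVec u.1 i - S.mulVec u.1 i = ∑ j, (fun j => H i j - S i j) j * u.1 j := by
      simp only [Matrix.mulVec, dotProduct, sub_mul]
      rw [Finset.sum_sub_distrib]
    rw [heq]
    calc |∑ j, (fun j => H i j - S i j) j * u.1 j|
        ≤ N2 (fun j => H i j - S i j) * N2 u.1 := abs_sum_mul_le _ _
      _ = N2 (fun j => H i j - S i j) := by rw [N2_unit u, mul_one]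
      _ ≤ Real.sqrt d * ε := N2_le_of_abs_le hεnn fun j => hε i j
  calc N2 (fun i => H.mulVec u.1 i - S.mulVec u.1 i)
      ≤ Real.sqrt d * (Real.sqrt d * ε) :=
        N2_le_of_abs_le (mul_nonneg (Real.sqrt_nonneg _) hεnn) h1
    _ = d * ε := by rw [← mul_assoc, Real.mul_self_sqrt (Nat.cast_nonneg d)]

lemma ray_diff_le {d : ℕ} {H S : Matrix (Fin d) (Fin d) ℝ} {ε : ℝ}
    (hε : ∀ i j, |H i j - S i j| ≤ ε) (hεnn : 0 ≤ ε)
    (u : {u : Fin d → ℝ // ∑ i, u i ^ 2 = 1}) :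
    |ray H u.1 - ray S u.1| ≤ d * ε := by
  have heq : ray H u.1 - ray S u.1 = ∑ i, u.1 i * (fun i => H.mulVec u.1 i - S.mulVec u.1 i) i := by
    simp only [ray, mul_sub]
    rw [Finset.sum_sub_distrib]
  rw [heq]
  calc |∑ i, u.1 i * (fun i => H.mulVec u.1 i - S.mulVec u.1 i) i|
      ≤ N2 u.1 * N2 (fun i => H.mulVec u.1 i - S.mulVec u.1 i) := abs_sum_mul_le _ _
    _ = N2 (fun i => H.mulVec u.1 i - S.mulVec u.1 i) := by rw [N2_unit u, one_mul]
    _ ≤ d * ε := diffvec_bound hε hεnn u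

lemma N2_diff_le {d : ℕ} {H S : Matrix (Fin d) (Fin d) ℝ} {ε : ℝ}
    (hε : ∀ i j, |H i j - S i j| ≤ ε) (hεnn : 0 ≤ ε)
    (u : {u : Fin d → ℝ // ∑ i, u i ^ 2 = 1}) :
    |N2 (H.mulVec u.1) - N2 (S.mulVec u.1)| ≤ d * ε := by
  have h := abs_N2_sub_N2_le (H.mulVec u.1) (S.mulVec u.1)
  have heq : H.mulVec u.1 - S.mulVec u.1 = fun i => H.mulVec u.1 i - S.mulVec u.1 i := rfl
  rw [heq] at h
  exact h.trans (diffvec_bound hε hεnn u)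

lemma isEmpty_sph : IsEmpty {u : Fin 0 → ℝ // ∑ i, u i ^ 2 = 1} :=
  ⟨fun u => by simpa using u.2⟩

/-- The main quantitative bound. -/
lemma skew_bound {d : ℕ} {H S : Matrix (Fin d) (Fin d) ℝ}
    (hH : H.PosDef) (hS : S.PosDef) {ε : ℝ} (hε : ∀ i j, |H i j - S i j| ≤ ε) :
    |skew H - skew S| ≤ (2 + skew H) * (d : ℝ) * ε / lambdaMin S := by
  rcases Nat.eq_zero_or_pos d with h0 | hd
  · subst h0
    have := isEmpty_sph
    rw [skew, skew, Real.iSup_of_isEmpty, Real.iSup_of_isEmpty]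
    simp
  · have hεnn : 0 ≤ ε := le_trans (abs_nonneg _) (hε ⟨0, hd⟩ ⟨0, hd⟩)
    have hlam : 0 < lambdaMin S := lambdaMin_pos hS hd
    have := sph_nonempty hd
    set K := (2 + skew H) * ((d : ℝ) * ε) / lambdaMin S with hK
    have hpoint : ∀ u : {u : Fin d → ℝ // ∑ i, u i ^ 2 = 1},
        |gfun H u.1 - gfun S u.1| ≤ K := by
      intro u
      have h := ratio_diff_le (ray_pos hH u) (ray_pos hS u) hlam (lambdaMin_le hS u)
        (ray_le_N2 u) (N2_diff_le hε hεnn u) (ray_diff_le hε hεnn u)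
        (gfun_le_skew hH u)
      have heq : gfun H u.1 - gfun S u.1
          = N2 (H.mulVec u.1) / ray H u.1 - N2 (S.mulVec u.1) / ray S u.1 := by
        simp only [gfun]
        ring
      calc |gfun H u.1 - gfun S u.1|
          = |N2 (H.mulVec u.1) / ray H u.1 - N2 (S.mulVec u.1) / ray S u.1| := by rw [heq]
        _ ≤ K := h
    have hKnn : 0 ≤ K := by
      have := hpoint (Classical.arbitrary _)
      exact le_trans (abs_nonneg _) this
    have h1 : skew H ≤ skew S + K := by
      rw [skew_eq]
      apply ciSup_le
      intro u
      have h := hpoint u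
      rw [abs_sub_le_iff] at h
      have := gfun_le_skew hS u
      linarith [h.1]
    have h2 : skew S ≤ skew H + K := by
      rw [skew_eq S]
      apply ciSup_le
      intro u
      have h := hpoint u
      rw [abs_sub_le_iff] at h
      have := gfun_le_skew hH u
      linarith [h.2]
    have hKeq : (2 + skew H) * (d : ℝ) * ε / lambdaMin S = K := by
      rw [hK]; ring
    rw [hKeq, abs_sub_le_iff]
    constructor <;> linarith

end Facts

/-- Skewness is continuous on positive definite symmetric matrices; quantitatively,
`|Skew H - Skew S| ≤ (2 + Skew H) · d · ‖H - S‖_∞ / λ_min S`. -/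
theorem skew_continuous (d : ℕ) (H S : Matrix (Fin d) (Fin d) ℝ)
    (hH : H.PosDef) (hS : S.PosDef) (ε : ℝ) (hε : ∀ i j, |H i j - S i j| ≤ ε) :
    |skew H - skew S| ≤ (2 + skew H) * (d : ℝ) * ε / lambdaMin S ∧
      ContinuousOn skew {M : Matrix (Fin d) (Fin d) ℝ | M.PosDef} := by
  refine ⟨skew_bound hH hS hε, ?_⟩
  rcases Nat.eq_zero_or_pos d with h0 | hd
  · subst h0
    have := isEmpty_sph
    have hconst : (skew : Matrix (Fin 0) (Fin 0) ℝ → ℝ) = fun _ => 0 := by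
      funext M
      rw [skew, Real.iSup_of_isEmpty]
    rw [hconst]
    exact continuousOn_const
  · intro S₀ hS₀
    simp only [Set.mem_setOf_eq] at hS₀
    set lam := lambdaMin S₀ with hlamdef
    have hlam : 0 < lam := lambdaMin_pos hS₀ hd
    set E : Matrix (Fin d) (Fin d) ℝ → ℝ := fun M => ∑ i, ∑ j, |M i j - S₀ i j| with hE
    have hE_cont : Continuous E := by
      apply continuous_finset_sum
      intro i _
      apply continuous_finset_sum
      intro j _
      have : Continuous fun M : Matrix (Fin d) (Fin d) ℝ => M i j :=
        (continuous_apply j).comp (continuous_apply i)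
      exact (this.sub continuous_const).abs
    have hE0 : E S₀ = 0 := by simp [hE]
    have hEnn : ∀ M, 0 ≤ E M := fun M =>
      Finset.sum_nonneg fun i _ => Finset.sum_nonneg fun j _ => abs_nonneg _
    have hEentry : ∀ (M : Matrix (Fin d) (Fin d) ℝ) i j, |M i j - S₀ i j| ≤ E M := by
      intro M i j
      calc |M i j - S₀ i j| ≤ ∑ j', |M i j' - S₀ i j'| :=
            Finset.single_le_sum (f := fun j' => |M i j' - S₀ i j'|)
              (fun k _ => abs_nonneg _) (Finset.mem_univ j)
        _ ≤ E M := Finset.single_le_sum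
            (f := fun i' => ∑ j', |M i' j' - S₀ i' j'|)
            (fun k _ => Finset.sum_nonneg fun j' _ => abs_nonneg _) (Finset.mem_univ i)
    set U : Set (Matrix (Fin d) (Fin d) ℝ) := E ⁻¹' Set.Iio (lam / (2 * d)) with hU
    have hUopen : IsOpen U := isOpen_Iio.preimage hE_cont
    have hS₀U : S₀ ∈ U := by
      simp only [hU, Set.mem_preimage, Set.mem_Iio, hE0]
      positivity
    -- key bound on U ∩ PosDef
    have hbound : ∀ M ∈ U ∩ {M : Matrix (Fin d) (Fin d) ℝ | M.PosDef},
        |skew M - skew S₀| ≤ (2 + skew S₀) * (d : ℝ) / (lam / 2) * E M := by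
      rintro M ⟨hMU, hMpd⟩
      simp only [Set.mem_setOf_eq] at hMpd
      have hEM : E M < lam / (2 * d) := hMU
      -- lambdaMin M ≥ lam / 2
      have hlamM : lam / 2 ≤ lambdaMin M := by
        rw [lambdaMin_eq]
        have := sph_nonempty hd
        apply le_ciInf
        intro u
        have h1 := ray_diff_le (H := M) (S := S₀) (fun i j => hEentry M i j) (hEnn M) u
        have h2 := lambdaMin_le hS₀ u
        rw [abs_sub_le_iff] at h1
        have hdE : (d : ℝ) * E M ≤ lam / 2 := by
          have hd1 : (1 : ℝ) ≤ d := by exact_mod_cast hd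
          have : (d : ℝ) * E M < (d : ℝ) * (lam / (2 * d)) := by
            apply mul_lt_mul_of_pos_left hEM
            positivity
          have hdne : (d : ℝ) ≠ 0 := by positivity
          have heq : (d : ℝ) * (lam / (2 * d)) = lam / 2 := by
            field_simp
          have h3 : (d : ℝ) * E M < lam / 2 := by rw [← heq]; exact this
          linarith
        linarith [h1.2]
      have hskb := skew_bound (H := S₀) (S := M) hS₀ hMpd
        (fun i j => by rw [abs_sub_comm]; exact hEentry M i j)
      rw [abs_sub_comm] at hskb
      have hsknn : 0 ≤ skew S₀ := skew_nonneg hS₀ hd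
      calc |skew M - skew S₀| ≤ (2 + skew S₀) * (d : ℝ) * E M / lambdaMin M := hskb
        _ ≤ (2 + skew S₀) * (d : ℝ) * E M / (lam / 2) := by
            apply div_le_div_of_nonneg_left _ (by positivity) hlamM
            positivity
        _ = (2 + skew S₀) * (d : ℝ) / (lam / 2) * E M := by ring
    -- squeeze
    have hmem : U ∩ {M : Matrix (Fin d) (Fin d) ℝ | M.PosDef}
        ∈ nhdsWithin S₀ {M : Matrix (Fin d) (Fin d) ℝ | M.PosDef} :=
      Filter.inter_mem (nhdsWithin_le_nhds (hUopen.mem_nhds hS₀U)) self_mem_nhdsWithin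
    have htend : Filter.Tendsto (fun M => (2 + skew S₀) * (d : ℝ) / (lam / 2) * E M)
        (nhdsWithin S₀ {M : Matrix (Fin d) (Fin d) ℝ | M.PosDef}) (nhds 0) := by
      have hE' : Filter.Tendsto E
          (nhdsWithin S₀ {M : Matrix (Fin d) (Fin d) ℝ | M.PosDef}) (nhds 0) := by
        have := (hE_cont.tendsto S₀).mono_left
          (nhdsWithin_le_nhds (s := {M : Matrix (Fin d) (Fin d) ℝ | M.PosDef}))
        rwa [hE0] at this
      simpa using hE'.const_mul ((2 + skew S₀) * (d : ℝ) / (lam / 2))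
    rw [ContinuousWithinAt, tendsto_iff_dist_tendsto_zero]
    refine squeeze_zero' (Filter.Eventually.of_forall fun _ => dist_nonneg) ?_ htend
    filter_upwards [hmem] with M hM
    rw [Real.dist_eq]
    exact hbound M hM
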